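/- Let n ≥ 3, m ≥ 1, and S_1, …, S_m be proper subsets of U = {u_1, …, u_n}, and let G(U,S) be the associated set-cover graph. If there exists J ⊆ [m] with |J| = t and ∪_{i∈J} S_i = U, then there exists a set W of exactly t unordered pairs of distinct followers, disjoint from E(G(U,S)), such that in the graph G(U,S) ∪ W at least 4m + n(t+1) + t followers have core number at least 3. -/

import Mathlib

/-- The degree of a vertex: the number of its neighbors. -/
noncomputable def deg {V : Type*} (G : SimpleGraph V) (v : V) : ℕ :=
  (G.neighborSet v).ncard

/-- The core number of a vertex `v`: the largest `k` such that `v` belongs to a subgraph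
in which every vertex has degree at least `k` within that subgraph (equivalently, an
induced subgraph with minimum degree at least `k`). -/
noncomputable def coreNumber {V : Type*} (G : SimpleGraph V) (v : V) : ℕ :=
  sSup {k : ℕ | ∃ s : Set V, v ∈ s ∧ ∀ w ∈ s, k ≤ (s ∩ G.neighborSet w).ncard}

/-- Vertices of the set-cover reduction graph `G(U,S)` (0-based indices): `X i j` is
`X_{i+1,j+1}`, `W i q` is `W_{i+1,q+1}` and `Z j q` is `Z_{j+1,q+1}` of the paper. -/
inductive SCV (m n : ℕ) where
  | X : Fin m → Fin n → SCV m n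
  | W : Fin m → Fin 5 → SCV m n
  | Z : Fin n → Fin 5 → SCV m n

/-- Generating relation of `G(U,S)`, where `Su i` is the set `S_{i+1} ⊆ U` (a set of
indices `j`, `u_{j+1} ∈ S_{i+1}` iff `j ∈ Su i`): the path `X_{i,2},…,X_{i,n}` plus the
edge `{X_{i,n},X_{i,1}}`; `W_{i,1}` joined to `W_{i,2}` and `W_{i,5}`; a clique on
`{W_{i,2},…,W_{i,5}}`; `{W_{i,1},X_{i,j}}` iff `u_j ∉ S_i`; `Z_{j,1}` joined to `Z_{j,2}`
and `Z_{j,5}`; a clique on `{Z_{j,2},…,Z_{j,5}}`; and `{X_{i,j},Z_{j,1}}` iff `u_j ∈ S_i`. -/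
def scRel {m n : ℕ} (Su : Fin m → Finset (Fin n)) : SCV m n → SCV m n → Prop
  | .X i j, .X i' j' => i = i' ∧
      ((1 ≤ j.val ∧ j'.val = j.val + 1) ∨ (j.val = n - 1 ∧ j'.val = 0))
  | .W i q, .W i' q' => i = i' ∧
      ((q.val = 0 ∧ (q'.val = 1 ∨ q'.val = 4)) ∨ (1 ≤ q.val ∧ 1 ≤ q'.val))
  | .W i q, .X i' j => i = i' ∧ q.val = 0 ∧ j ∉ Su i
  | .Z j q, .Z j' q' => j = j' ∧
      ((q.val = 0 ∧ (q'.val = 1 ∨ q'.val = 4)) ∨ (1 ≤ q.val ∧ 1 ≤ q'.val))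
  | .X i j, .Z j' q => j = j' ∧ q.val = 0 ∧ j ∈ Su i
  | _, _ => False

/-- The set-cover reduction graph `G(U,S)`. -/
def scGraph {m n : ℕ} (Su : Fin m → Finset (Fin n)) : SimpleGraph (SCV m n) :=
  SimpleGraph.fromRel (scRel Su)

/-- Followers of `G(U,S)`: all vertices except the leaders `Z_{j,q}`, `q ∈ {2,3,4,5}`. -/
def scFollower {m n : ℕ} : SCV m n → Prop
  | .Z _ q => q.val = 0
  | _ => True

deriving instance DecidableEq for SCV

instance {m n : ℕ} : Finite (SCV m n) := by
  let f : SCV m n → (Fin m × Fin n) ⊕ (Fin m × Fin 5) ⊕ (Fin n × Fin 5) := fun v =>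
    match v with
    | .X i j => Sum.inl (i, j)
    | .W i q => Sum.inr (Sum.inl (i, q))
    | .Z j q => Sum.inr (Sum.inr (j, q))
  have hf : Function.Injective f := by
    intro a b h
    cases a <;> cases b <;> simp_all [f]
  exact Finite.of_injective f hf

/-- The witness subgraph vertex set. -/
def inH {m n : ℕ} (J : Finset (Fin m)) : SCV m n → Prop
  | .X i _ => i ∈ J
  | .W i q => 1 ≤ q.val ∨ i ∈ J
  | .Z _ _ => True

def Hset {m n : ℕ} (J : Finset (Fin m)) : Set (SCV m n) := {v | inH J v}

lemma three_le_ncard {α : Type*} {s : Set α} (hs : s.Finite) {a b c : α}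
    (ha : a ∈ s) (hb : b ∈ s) (hc : c ∈ s)
    (hab : a ≠ b) (hac : a ≠ c) (hbc : b ≠ c) : 3 ≤ s.ncard := by
  have hsub : ({a, b, c} : Set α) ⊆ s := by
    intro x hx
    simp only [Set.mem_insert_iff, Set.mem_singleton_iff] at hx
    rcases hx with rfl | rfl | rfl <;> assumption
  have h3 : ({a, b, c} : Set α).ncard = 3 := by
    rw [Set.ncard_insert_of_notMem (by simp [hab, hac])
      ((Set.finite_singleton c).insert b), Set.ncard_pair hbc]
  exact h3 ▸ Set.ncard_le_ncard hsub hs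

lemma three_le_coreNumber {V : Type*} [Finite V] (G : SimpleGraph V) (v : V) (s : Set V)
    (hv : v ∈ s) (h : ∀ w ∈ s, 3 ≤ (s ∩ G.neighborSet w).ncard) : 3 ≤ coreNumber G v := by
  apply le_csSup
  · refine ⟨Nat.card V, ?_⟩
    rintro k ⟨s', hv', h'⟩
    calc k ≤ (s' ∩ G.neighborSet v).ncard := h' v hv'
      _ ≤ (Set.univ : Set V).ncard :=
          Set.ncard_le_ncard (Set.subset_univ _) Set.finite_univ
      _ = Nat.card V := Set.ncard_univ V
  · exact ⟨s, hv, h⟩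

def succIdx {n : ℕ} (hn : 3 ≤ n) (j : Fin n) : Fin n :=
  if _ : j.val = n - 1 then ⟨0, by omega⟩ else ⟨j.val + 1, by have := j.isLt; omega⟩

def predIdx {n : ℕ} (hn : 3 ≤ n) (j : Fin n) : Fin n :=
  if _ : j.val = 0 then ⟨n - 1, by omega⟩ else ⟨j.val - 1, by have := j.isLt; omega⟩

lemma succIdx_spec {n : ℕ} (hn : 3 ≤ n) (j : Fin n) :
    (succIdx hn j).val = j.val + 1 ∨ (j.val = n - 1 ∧ (succIdx hn j).val = 0) := by
  unfold succIdx
  split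
  · right; exact ⟨by assumption, rfl⟩
  · left; rfl

lemma predIdx_spec {n : ℕ} (hn : 3 ≤ n) (j : Fin n) :
    j.val = (predIdx hn j).val + 1 ∨ ((predIdx hn j).val = n - 1 ∧ j.val = 0) := by
  have := j.isLt
  unfold predIdx
  split
  · right; exact ⟨rfl, by assumption⟩
  · left; simp only []; omega

lemma succIdx_ne_predIdx {n : ℕ} (hn : 3 ≤ n) (j : Fin n) :
    succIdx hn j ≠ predIdx hn j := by
  have hlt := j.isLt
  have h1 := succIdx_spec hn j
  have h2 := predIdx_spec hn j
  intro h
  rw [h] at h1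
  omega

/-- Completeness direction of the NP-hardness reduction (Theorem 4): if `t` of the proper
sets `S_i` cover `U`, then one can add exactly `t` non-edges between distinct followers so
that at least `4m + n(t+1) + t` followers get core number at least 3. -/
theorem stmt_11 {m n : ℕ} (hn : 3 ≤ n) (hm : 1 ≤ m) (Su : Fin m → Finset (Fin n))
    (hproper : ∀ i, Su i ≠ Finset.univ) (t : ℕ)
    (J : Finset (Fin m)) (hJcard : J.card = t)
    (hcover : ∀ j : Fin n, ∃ i ∈ J, j ∈ Su i) :
    ∃ W : Finset (Sym2 (SCV m n)),
      W.card = t ∧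
      (∀ e ∈ W, ¬ e.IsDiag) ∧
      (∀ e ∈ W, ∀ v ∈ e, scFollower v) ∧
      (∀ e ∈ W, e ∉ (scGraph Su).edgeSet) ∧
      4 * m + n * (t + 1) + t ≤
        {v : SCV m n | scFollower v ∧
          3 ≤ coreNumber
            (scGraph Su ⊔ SimpleGraph.fromEdgeSet (↑W : Set (Sym2 (SCV m n)))) v}.ncard := by
  classical
  have hn0 : 0 < n := by omega
  obtain ⟨j0, hj0v⟩ : ∃ j : Fin n, j.val = 0 := ⟨⟨0, hn0⟩, rfl⟩
  obtain ⟨j1, hj1v⟩ : ∃ j : Fin n, j.val = 1 := ⟨⟨1, by omega⟩, rfl⟩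
  have hj01 : j0 ≠ j1 := by
    intro h; apply_fun Fin.val at h; omega
  set Ws : Finset (Sym2 (SCV m n)) :=
    J.image (fun i => s(SCV.X i j0, SCV.X i j1)) with hWs
  refine ⟨Ws, ?_, ?_, ?_, ?_, ?_⟩
  · -- cardinality
    have hinj : Function.Injective (fun i : Fin m => s(SCV.X i j0, SCV.X i j1)) := by
      intro a b h
      rcases Sym2.eq_iff.mp h with ⟨h1, -⟩ | ⟨h1, -⟩
      · injection h1
      · exfalso; injection h1 with _ h2; exact hj01 h2
    rw [hWs, Finset.card_image_of_injective _ hinj, hJcard]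
  · -- no diagonal
    intro e he
    rw [hWs] at he
    simp only [Finset.mem_image] at he
    obtain ⟨i, -, rfl⟩ := he
    rw [Sym2.mk_isDiag_iff]
    intro h; injection h with _ h2; exact hj01 h2
  · -- followers
    intro e he v hv
    rw [hWs] at he
    simp only [Finset.mem_image] at he
    obtain ⟨i, -, rfl⟩ := he
    rcases Sym2.mem_iff.mp hv with rfl | rfl <;> trivial
  · -- non-edges
    intro e he
    rw [hWs] at he
    simp only [Finset.mem_image] at he
    obtain ⟨i, -, rfl⟩ := he
    intro hadj
    rw [SimpleGraph.mem_edgeSet] at hadj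
    have h := ((SimpleGraph.fromRel_adj _ _ _).mp hadj).2
    simp only [scRel] at h
    rcases h with ⟨-, h⟩ | ⟨-, h⟩ <;> rcases h with ⟨h1, h2⟩ | ⟨h1, h2⟩ <;> omega
  · -- the count
    set G' : SimpleGraph (SCV m n) :=
      scGraph Su ⊔ SimpleGraph.fromEdgeSet (↑Ws : Set (Sym2 (SCV m n))) with hG'
    -- membership helpers for Hset
    have hXH : ∀ (i : Fin m) (j : Fin n), i ∈ J → SCV.X i j ∈ Hset J := fun _ _ hi => hi
    have hWH : ∀ (i : Fin m) (q : Fin 5), 1 ≤ q.val ∨ i ∈ J → SCV.W (n := n) i q ∈ Hset J :=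
      fun _ _ h => h
    have hZH : ∀ (j : Fin n) (q : Fin 5), SCV.Z (m := m) j q ∈ Hset J := fun _ _ => trivial
    -- inequality helpers
    have hXWne : ∀ (i i' : Fin m) (j : Fin n) (q : Fin 5), SCV.X i j ≠ SCV.W i' q :=
      fun _ _ _ _ h => by cases h
    have hXZne : ∀ (i : Fin m) (j j' : Fin n) (q : Fin 5), SCV.X i j ≠ SCV.Z j' q :=
      fun _ _ _ _ h => by cases h
    have hWXne : ∀ (i i' : Fin m) (q : Fin 5) (j : Fin n), SCV.W i q ≠ SCV.X i' j :=
      fun _ _ _ _ h => by cases h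
    have hZXne : ∀ (j : Fin n) (q : Fin 5) (i : Fin m) (j' : Fin n),
        SCV.Z j q ≠ SCV.X i j' := fun _ _ _ _ h => by cases h
    have hWWne : ∀ (i : Fin m) (a b : Fin 5), a ≠ b → SCV.W (n := n) i a ≠ SCV.W i b := by
      intro i a b hab h
      injection h with _ h2
      exact hab h2
    have hZZne : ∀ (j : Fin n) (a b : Fin 5), a ≠ b → SCV.Z (m := m) j a ≠ SCV.Z j b := by
      intro j a b hab h
      injection h with _ h2
      exact hab h2
    -- adjacency helpers
    have hrelAdj : ∀ a b : SCV m n, a ≠ b →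
        scRel Su a b ∨ scRel Su b a → G'.Adj a b := by
      intro a b hne h
      rw [hG', SimpleGraph.sup_adj]
      exact Or.inl ((SimpleGraph.fromRel_adj _ _ _).mpr ⟨hne, h⟩)
    have hWedge : ∀ i ∈ J, G'.Adj (SCV.X i j0) (SCV.X i j1) := by
      intro i hi
      rw [hG', SimpleGraph.sup_adj]
      refine Or.inr ((SimpleGraph.fromEdgeSet_adj _).mpr ⟨?_, ?_⟩)
      · rw [hWs]; exact Finset.mem_coe.mpr (Finset.mem_image_of_mem _ hi)
      · intro h; injection h with _ h2; exact hj01 h2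
    have hXadj : ∀ i ∈ J, ∀ a b : Fin n,
        (b.val = a.val + 1 ∨ (a.val = n - 1 ∧ b.val = 0)) →
        G'.Adj (SCV.X i a) (SCV.X i b) := by
      intro i hi a b hab
      have halt := a.isLt
      have hblt := b.isLt
      have hvne : a.val ≠ b.val := by rcases hab with h | ⟨h1, h2⟩ <;> omega
      have hne : SCV.X i a ≠ SCV.X i b := by
        intro h
        injection h with _ h2
        exact hvne (congrArg Fin.val h2)
      rcases hab with hb | ⟨ha, hb⟩
      · rcases Nat.eq_zero_or_pos a.val with ha0 | ha1
        · have ha' : a = j0 := Fin.ext (by omega)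
          have hb' : b = j1 := Fin.ext (by omega)
          rw [ha', hb']; exact hWedge i hi
        · exact hrelAdj (SCV.X i a) (SCV.X i b) hne (Or.inl ⟨rfl, Or.inl ⟨ha1, hb⟩⟩)
      · exact hrelAdj (SCV.X i a) (SCV.X i b) hne (Or.inl ⟨rfl, Or.inr ⟨ha, hb⟩⟩)
    have gadget : ∀ q : Fin 5, 1 ≤ q.val → ∃ a b c : Fin 5,
        (1 ≤ a.val ∧ 1 ≤ b.val ∧ 1 ≤ c.val) ∧ (a ≠ b ∧ a ≠ c ∧ b ≠ c) ∧
        (a ≠ q ∧ b ≠ q ∧ c ≠ q) := by decide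
    have hdeg : ∀ w ∈ Hset J, 3 ≤ ((Hset J) ∩ G'.neighborSet w).ncard := by
      intro w hw
      have hfin : ((Hset J) ∩ G'.neighborSet w).Finite := Set.toFinite _
      match w with
      | SCV.X i j =>
        have hi : i ∈ J := hw
        have h1 := hXadj i hi j (succIdx hn j) (succIdx_spec hn j)
        have h2 := (hXadj i hi (predIdx hn j) j (predIdx_spec hn j)).symm
        have hne12 : SCV.X i (succIdx hn j) ≠ SCV.X i (predIdx hn j) := by
          intro h
          injection h with _ h2'
          exact succIdx_ne_predIdx hn j h2'
        by_cases hjS : j ∈ Su i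
        · have h3 : G'.Adj (SCV.X i j) (SCV.Z j ⟨0, by omega⟩) :=
            hrelAdj (SCV.X i j) (SCV.Z j ⟨0, by omega⟩) (hXZne _ _ _ _)
              (Or.inl ⟨rfl, rfl, hjS⟩)
          exact three_le_ncard hfin
            (Set.mem_inter (hXH i _ hi) ((G'.mem_neighborSet _ _).mpr h1))
            (Set.mem_inter (hXH i _ hi) ((G'.mem_neighborSet _ _).mpr h2))
            (Set.mem_inter (hZH j _) ((G'.mem_neighborSet _ _).mpr h3))
            hne12 (hXZne _ _ _ _) (hXZne _ _ _ _)
        · have h3 : G'.Adj (SCV.X i j) (SCV.W i ⟨0, by omega⟩) :=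
            (hrelAdj (SCV.W i ⟨0, by omega⟩) (SCV.X i j) (hWXne _ _ _ _)
              (Or.inl ⟨rfl, rfl, hjS⟩)).symm
          exact three_le_ncard hfin
            (Set.mem_inter (hXH i _ hi) ((G'.mem_neighborSet _ _).mpr h1))
            (Set.mem_inter (hXH i _ hi) ((G'.mem_neighborSet _ _).mpr h2))
            (Set.mem_inter (hWH i _ (Or.inr hi)) ((G'.mem_neighborSet _ _).mpr h3))
            hne12 (hXWne _ _ _ _) (hXWne _ _ _ _)
      | SCV.W i q =>
        rcases Nat.eq_zero_or_pos q.val with hq0 | hq1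
        · have hi : i ∈ J := (hw : 1 ≤ q.val ∨ i ∈ J).resolve_left (by omega)
          obtain ⟨j, hj⟩ : ∃ j, j ∉ Su i := by
            by_contra h
            push_neg at h
            exact hproper i (Finset.eq_univ_iff_forall.mpr h)
          have h1 : G'.Adj (SCV.W i q) (SCV.W i ⟨1, by omega⟩) :=
            hrelAdj (SCV.W i q) (SCV.W i ⟨1, by omega⟩)
              (hWWne i q _ (by intro h; rw [h] at hq0; exact absurd hq0 (by simp)))
              (Or.inl ⟨rfl, Or.inl ⟨hq0, Or.inl rfl⟩⟩)
          have h2 : G'.Adj (SCV.W i q) (SCV.W i ⟨4, by omega⟩) :=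
            hrelAdj (SCV.W i q) (SCV.W i ⟨4, by omega⟩)
              (hWWne i q _ (by intro h; rw [h] at hq0; exact absurd hq0 (by simp)))
              (Or.inl ⟨rfl, Or.inl ⟨hq0, Or.inr rfl⟩⟩)
          have h3 : G'.Adj (SCV.W i q) (SCV.X i j) :=
            hrelAdj (SCV.W i q) (SCV.X i j) (hWXne _ _ _ _) (Or.inl ⟨rfl, hq0, hj⟩)
          exact three_le_ncard hfin
            (Set.mem_inter (hWH i _ (Or.inl (by norm_num)))
              ((G'.mem_neighborSet _ _).mpr h1))
            (Set.mem_inter (hWH i _ (Or.inl (by norm_num)))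
              ((G'.mem_neighborSet _ _).mpr h2))
            (Set.mem_inter (hXH i _ hi) ((G'.mem_neighborSet _ _).mpr h3))
            (hWWne i ⟨1, by omega⟩ ⟨4, by omega⟩ (by simp [Fin.ext_iff]))
            (hWXne _ _ _ _) (hWXne _ _ _ _)
        · obtain ⟨a, b, c, ⟨ha1, hb1, hc1⟩, ⟨hab, hac, hbc⟩, haq, hbq, hcq⟩ :=
            gadget q hq1
          have hadj : ∀ x : Fin 5, 1 ≤ x.val → x ≠ q → G'.Adj (SCV.W i q) (SCV.W i x) :=
            fun x hx1 hxq => hrelAdj (SCV.W i q) (SCV.W i x) (hWWne i q x hxq.symm)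
              (Or.inl ⟨rfl, Or.inr ⟨hq1, hx1⟩⟩)
          exact three_le_ncard hfin
            (Set.mem_inter (hWH i a (Or.inl ha1))
              ((G'.mem_neighborSet _ _).mpr (hadj a ha1 haq)))
            (Set.mem_inter (hWH i b (Or.inl hb1))
              ((G'.mem_neighborSet _ _).mpr (hadj b hb1 hbq)))
            (Set.mem_inter (hWH i c (Or.inl hc1))
              ((G'.mem_neighborSet _ _).mpr (hadj c hc1 hcq)))
            (hWWne i a b hab) (hWWne i a c hac) (hWWne i b c hbc)
      | SCV.Z j q =>
        rcases Nat.eq_zero_or_pos q.val with hq0 | hq1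
        · obtain ⟨i, hiJ, hiS⟩ := hcover j
          have h1 : G'.Adj (SCV.Z j q) (SCV.Z j ⟨1, by omega⟩) :=
            hrelAdj (SCV.Z j q) (SCV.Z j ⟨1, by omega⟩)
              (hZZne j q _ (by intro h; rw [h] at hq0; exact absurd hq0 (by simp)))
              (Or.inl ⟨rfl, Or.inl ⟨hq0, Or.inl rfl⟩⟩)
          have h2 : G'.Adj (SCV.Z j q) (SCV.Z j ⟨4, by omega⟩) :=
            hrelAdj (SCV.Z j q) (SCV.Z j ⟨4, by omega⟩)
              (hZZne j q _ (by intro h; rw [h] at hq0; exact absurd hq0 (by simp)))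
              (Or.inl ⟨rfl, Or.inl ⟨hq0, Or.inr rfl⟩⟩)
          have h3 : G'.Adj (SCV.Z j q) (SCV.X i j) :=
            hrelAdj (SCV.Z j q) (SCV.X i j) (hZXne _ _ _ _) (Or.inr ⟨rfl, hq0, hiS⟩)
          exact three_le_ncard hfin
            (Set.mem_inter (hZH j _) ((G'.mem_neighborSet _ _).mpr h1))
            (Set.mem_inter (hZH j _) ((G'.mem_neighborSet _ _).mpr h2))
            (Set.mem_inter (hXH i _ hiJ) ((G'.mem_neighborSet _ _).mpr h3))
            (hZZne j ⟨1, by omega⟩ ⟨4, by omega⟩ (by simp [Fin.ext_iff]))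
            (hZXne _ _ _ _) (hZXne _ _ _ _)
        · obtain ⟨a, b, c, ⟨ha1, hb1, hc1⟩, ⟨hab, hac, hbc⟩, haq, hbq, hcq⟩ :=
            gadget q hq1
          have hadj : ∀ x : Fin 5, 1 ≤ x.val → x ≠ q → G'.Adj (SCV.Z j q) (SCV.Z j x) :=
            fun x hx1 hxq => hrelAdj (SCV.Z j q) (SCV.Z j x) (hZZne j q x hxq.symm)
              (Or.inl ⟨rfl, Or.inr ⟨hq1, hx1⟩⟩)
          exact three_le_ncard hfin
            (Set.mem_inter (hZH j a) ((G'.mem_neighborSet _ _).mpr (hadj a ha1 haq)))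
            (Set.mem_inter (hZH j b) ((G'.mem_neighborSet _ _).mpr (hadj b hb1 hbq)))
            (Set.mem_inter (hZH j c) ((G'.mem_neighborSet _ _).mpr (hadj c hc1 hcq)))
            (hZZne j a b hab) (hZZne j a c hac) (hZZne j b c hbc)
    have hcore : ∀ v ∈ Hset J, 3 ≤ coreNumber G' v := fun v hv =>
      three_le_coreNumber G' v (Hset J) hv hdeg
    -- the counting
    set F1 : Finset (SCV m n) :=
      (J ×ˢ (Finset.univ : Finset (Fin n))).image (fun p => SCV.X p.1 p.2) with hF1
    set F2 : Finset (SCV m n) :=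
      ((Finset.univ : Finset (Fin m)) ×ˢ
        (Finset.univ.filter (fun q : Fin 5 => 1 ≤ q.val))).image
        (fun p => SCV.W p.1 p.2) with hF2
    set F3 : Finset (SCV m n) := J.image (fun i => SCV.W i ⟨0, by omega⟩) with hF3
    set F4 : Finset (SCV m n) :=
      (Finset.univ : Finset (Fin n)).image (fun j => SCV.Z j ⟨0, by omega⟩) with hF4
    have hXinj : Function.Injective (fun p : Fin m × Fin n => SCV.X p.1 p.2) := by
      intro p q h
      injection h with h1 h2
      exact Prod.ext h1 h2
    have hWinj : Function.Injective (fun p : Fin m × Fin 5 => SCV.W (n := n) p.1 p.2) := by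
      intro p q h
      injection h with h1 h2
      exact Prod.ext h1 h2
    have hfc : (Finset.univ.filter (fun q : Fin 5 => 1 ≤ q.val)).card = 4 := by decide
    have hc1 : F1.card = t * n := by
      rw [hF1, Finset.card_image_of_injective _ hXinj, Finset.card_product, hJcard,
        Finset.card_univ, Fintype.card_fin]
    have hc2 : F2.card = m * 4 := by
      rw [hF2, Finset.card_image_of_injective _ hWinj, Finset.card_product,
        Finset.card_univ, Fintype.card_fin, hfc]
    have hc3 : F3.card = t := by
      rw [hF3, Finset.card_image_of_injective _ ?_, hJcard]
      intro a b h
      injection h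
    have hc4 : F4.card = n := by
      rw [hF4, Finset.card_image_of_injective _ ?_, Finset.card_univ, Fintype.card_fin]
      intro a b h
      injection h
    have hd12 : Disjoint F1 F2 := by
      rw [Finset.disjoint_left]
      rintro v hv1 hv2
      rw [hF1, Finset.mem_image] at hv1
      rw [hF2, Finset.mem_image] at hv2
      obtain ⟨p, -, rfl⟩ := hv1
      obtain ⟨q, -, h⟩ := hv2
      exact by cases h
    have hd13 : Disjoint F1 F3 := by
      rw [Finset.disjoint_left]
      rintro v hv1 hv2
      rw [hF1, Finset.mem_image] at hv1
      rw [hF3, Finset.mem_image] at hv2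
      obtain ⟨p, -, rfl⟩ := hv1
      obtain ⟨q, -, h⟩ := hv2
      exact by cases h
    have hd14 : Disjoint F1 F4 := by
      rw [Finset.disjoint_left]
      rintro v hv1 hv2
      rw [hF1, Finset.mem_image] at hv1
      rw [hF4, Finset.mem_image] at hv2
      obtain ⟨p, -, rfl⟩ := hv1
      obtain ⟨q, -, h⟩ := hv2
      exact by cases h
    have hd23 : Disjoint F2 F3 := by
      rw [Finset.disjoint_left]
      rintro v hv1 hv2
      rw [hF2, Finset.mem_image] at hv1
      rw [hF3, Finset.mem_image] at hv2
      obtain ⟨⟨a, q⟩, hq, rfl⟩ := hv1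
      obtain ⟨b, -, h⟩ := hv2
      injection h with h1 h2
      subst h2
      simp [Finset.mem_filter] at hq
    have hd24 : Disjoint F2 F4 := by
      rw [Finset.disjoint_left]
      rintro v hv1 hv2
      rw [hF2, Finset.mem_image] at hv1
      rw [hF4, Finset.mem_image] at hv2
      obtain ⟨p, -, rfl⟩ := hv1
      obtain ⟨q, -, h⟩ := hv2
      exact by cases h
    have hd34 : Disjoint F3 F4 := by
      rw [Finset.disjoint_left]
      rintro v hv1 hv2
      rw [hF3, Finset.mem_image] at hv1
      rw [hF4, Finset.mem_image] at hv2
      obtain ⟨p, -, rfl⟩ := hv1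
      obtain ⟨q, -, h⟩ := hv2
      exact by cases h
    have hcard : (F1 ∪ F2 ∪ F3 ∪ F4).card = t * n + m * 4 + t + n := by
      rw [Finset.card_union_of_disjoint
          (Finset.disjoint_union_left.mpr
            ⟨Finset.disjoint_union_left.mpr ⟨hd14, hd24⟩, hd34⟩),
        Finset.card_union_of_disjoint
          (Finset.disjoint_union_left.mpr ⟨hd13, hd23⟩),
        Finset.card_union_of_disjoint hd12, hc1, hc2, hc3, hc4]
    have hsub : ↑(F1 ∪ F2 ∪ F3 ∪ F4) ⊆
        {v : SCV m n | scFollower v ∧ 3 ≤ coreNumber G' v} := by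
      intro v hv
      simp only [Finset.coe_union, Set.mem_union, Finset.mem_coe] at hv
      rcases hv with ((hv | hv) | hv) | hv
      · rw [hF1, Finset.mem_image] at hv
        obtain ⟨⟨a, b⟩, hp, rfl⟩ := hv
        simp only [Finset.mem_product] at hp
        exact ⟨trivial, hcore _ (hXH a b hp.1)⟩
      · rw [hF2, Finset.mem_image] at hv
        obtain ⟨⟨a, q⟩, hp, rfl⟩ := hv
        simp only [Finset.mem_product, Finset.mem_filter] at hp
        exact ⟨trivial, hcore _ (hWH a q (Or.inl hp.2.2))⟩
      · rw [hF3, Finset.mem_image] at hv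
        obtain ⟨a, ha, rfl⟩ := hv
        exact ⟨trivial, hcore _ (hWH a _ (Or.inr ha))⟩
      · rw [hF4, Finset.mem_image] at hv
        obtain ⟨b, -, rfl⟩ := hv
        exact ⟨rfl, hcore _ (hZH b _)⟩
    calc 4 * m + n * (t + 1) + t = t * n + m * 4 + t + n := by ring
      _ = (F1 ∪ F2 ∪ F3 ∪ F4).card := hcard.symm
      _ = (↑(F1 ∪ F2 ∪ F3 ∪ F4) : Set (SCV m n)).ncard := (Set.ncard_coe_finset _).symm
      _ ≤ _ := Set.ncard_le_ncard hsub (Set.toFinite _)
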